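/- arXiv:2404.08631 — 9 statements merged into one kernel-verified Lean document; each statement's English description precedes it below -/
import Mathlib

section
/- Let d_1 ≤ d_2 ≤ ... ≤ d_K be real numbers and let K' be a natural number with 2K' < K. For any T ≤ K', among all sequences e_1 ≤ e_2 ≤ ... ≤ e_K obtained by changing at most T of the values d_i (and re-sorting), the maximum possible value of the trimmed mean (∑_{i=K'+1}^{K-K'} e_i)/(K-2K') equals (∑_{i=K'+1+T}^{K-K'+T} d_i)/(K-2K'). -/
open Finset

noncomputable def tm (K Kp : ℕ) (e : ℕ → ℝ) : ℝ :=
  (∑ i ∈ Finset.Icc (Kp + 1) (K - Kp), e i) / ((K : ℝ) - 2 * Kp)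

noncomputable def sortedOf (E : Multiset ℝ) : ℕ → ℝ :=
  fun i => (E.sort (· ≤ ·)).getD (i - 1) 0

def msOf (K : ℕ) (d : ℕ → ℝ) : Multiset ℝ := (Finset.Icc 1 K).val.map d

noncomputable def Ub (K Kp : ℕ) (d : ℕ → ℝ) (t : ℕ) : ℝ :=
  (∑ i ∈ Finset.Icc (Kp + 1 + t) (K - Kp + t), d i) / ((K : ℝ) - 2 * Kp)

noncomputable def Lb (K Kp : ℕ) (d : ℕ → ℝ) (t : ℕ) : ℝ :=
  (∑ i ∈ Finset.Icc (Kp + 1 - t) (K - Kp - t), d i) / ((K : ℝ) - 2 * Kp)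

lemma msOf_coe (K : ℕ) (f : ℕ → ℝ) :
    msOf K f = (((List.range' 1 K).map f : List ℝ) : Multiset ℝ) := by
  rw [msOf, Nat.Icc_eq_range']
  simp

lemma sort_msOf (K : ℕ) (f : ℕ → ℝ)
    (hf : ∀ i j, 1 ≤ i → i ≤ j → j ≤ K → f i ≤ f j) :
    (msOf K f).sort (· ≤ ·) = (List.range' 1 K).map f := by
  refine List.Perm.eq_of_pairwise' (r := (· ≤ ·)) ?_ ?_ ?_
  rotate_left 2
  · rw [← Multiset.coe_eq_coe, Multiset.sort_eq, msOf_coe]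
  · exact Multiset.pairwise_sort _ _
  · rw [List.pairwise_iff_getElem]
    intro i j hi hj hij
    simp only [List.length_map, List.length_range'] at hi hj
    simp only [List.getElem_map, List.getElem_range']
    exact hf _ _ (by omega) (by omega) (by omega)

lemma sortedOf_msOf (K : ℕ) (f : ℕ → ℝ)
    (hf : ∀ i j, 1 ≤ i → i ≤ j → j ≤ K → f i ≤ f j)
    {i : ℕ} (h1 : 1 ≤ i) (h2 : i ≤ K) :
    sortedOf (msOf K f) i = f i := by
  rw [sortedOf, sort_msOf K f hf]
  have hlen : i - 1 < ((List.range' 1 K).map f).length := by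
    simp only [List.length_map, List.length_range']; omega
  rw [List.getD_eq_getElem _ _ hlen]
  simp only [List.getElem_map, List.getElem_range']
  congr 1
  omega

lemma key (K T : ℕ) (d : ℕ → ℝ)
    (hmono : ∀ i j, 1 ≤ i → i ≤ j → j ≤ K → d i ≤ d j)
    (E : Multiset ℝ) (hcard : Multiset.card E = K)
    (hdiff : Multiset.card (msOf K d - E) ≤ T)
    {i : ℕ} (h1 : 1 ≤ i) (h2 : i + T ≤ K) :
    sortedOf E i ≤ d (i + T) := by
  by_contra hlt
  push_neg at hlt
  set x := d (i + T) with hx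
  set p : ℝ → Prop := fun a => x < a with hp
  set l := E.sort (· ≤ ·) with hldef
  have hl : l.length = K := by rw [hldef, Multiset.length_sort, hcard]
  have hi1 : i - 1 < l.length := by omega
  have he : sortedOf E i = l[i-1] := List.getD_eq_getElem _ _ hi1
  have hsorted : l.Pairwise (· ≤ ·) := Multiset.pairwise_sort _ _
  -- every element of drop (i-1) l is > x
  have hdropall : ∀ a ∈ l.drop (i-1), x < a := by
    intro a ha
    rw [List.mem_iff_getElem] at ha
    obtain ⟨n, hn, rfl⟩ := ha
    have hn' : i - 1 + n < l.length := by rw [List.length_drop] at hn; omega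
    rw [List.getElem_drop (h := hn)]
    have hle : l[i-1] ≤ l[i-1+n] := by
      have := hsorted.rel_get_of_le (a := ⟨i-1, hi1⟩)
        (b := ⟨i-1+n, hn'⟩) (by simp)
      simpa using this
    calc x < l[i-1] := he ▸ hlt
      _ ≤ l[i-1+n]'hn' := hle
  -- Claim A
  have cA : K - (i-1) ≤ Multiset.countP p E := by
    have hcoe : Multiset.countP p E = l.countP (fun a => decide (p a)) := by
      conv_lhs => rw [← Multiset.sort_eq E (· ≤ ·), ← hldef]
      rw [Multiset.coe_countP]
    have hdl : (l.drop (i-1)).countP (fun a => decide (p a)) = (l.drop (i-1)).length :=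
      List.countP_eq_length.mpr (fun a ha => by simpa [hp] using hdropall a ha)
    have hsub := (List.drop_sublist (i-1) l).countP_le (p := fun a => decide (p a))
    rw [hdl, List.length_drop, hl] at hsub
    omega
  -- Claim B
  have cBsub : Multiset.card (E - msOf K d) ≤ T := by
    have h1' := Multiset.card_add (E - msOf K d) (E ∩ msOf K d)
    rw [Multiset.sub_add_inter] at h1'
    have h2' := Multiset.card_add (msOf K d - E) (msOf K d ∩ E)
    rw [Multiset.sub_add_inter] at h2'
    have h3' : Multiset.card (msOf K d) = K := by
      rw [msOf, Multiset.card_map, Finset.card_val, Nat.card_Icc]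
      omega
    rw [Multiset.inter_comm] at h1'
    omega
  have cB : Multiset.countP p E ≤ T + Multiset.countP p (msOf K d) := by
    conv_lhs => rw [← Multiset.sub_add_inter E (msOf K d)]
    rw [Multiset.countP_add]
    have := Multiset.countP_le_card p (E - msOf K d)
    have := Multiset.countP_le_of_le p (Multiset.inter_le_right : E ∩ msOf K d ≤ msOf K d)
    omega
  -- Claim C
  have cC : Multiset.countP p (msOf K d) ≤ K - (i + T) := by
    rw [msOf, Multiset.countP_map]
    have : (Finset.Icc 1 K).val.filter (fun a => p (d a)) =
        ((Finset.Icc 1 K).filter (fun a => p (d a))).val := rfl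
    rw [this, Finset.card_val]
    have hsub : (Finset.Icc 1 K).filter (fun a => p (d a)) ⊆ Finset.Icc (i+T+1) K := by
      intro j hj
      simp only [Finset.mem_filter, Finset.mem_Icc] at hj ⊢
      refine ⟨?_, hj.1.2⟩
      by_contra hc
      push_neg at hc
      have : d j ≤ x := hmono j (i+T) hj.1.1 (by omega) (by omega)
      exact absurd hj.2 (by simp [hp]; linarith)
    calc ((Finset.Icc 1 K).filter (fun a => p (d a))).card
        ≤ (Finset.Icc (i+T+1) K).card := Finset.card_le_card hsub
      _ = K - (i + T) := by rw [Nat.card_Icc]; omega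
  omega

theorem stmt0 (K Kp T : ℕ) (hK : 2 * Kp < K) (hT : T ≤ Kp) (d : ℕ → ℝ)
    (hmono : ∀ i j, 1 ≤ i → i ≤ j → j ≤ K → d i ≤ d j) :
    IsGreatest
      {r : ℝ | ∃ E : Multiset ℝ, Multiset.card E = K ∧
        Multiset.card (msOf K d - E) ≤ T ∧ r = tm K Kp (sortedOf E)}
      ((∑ i ∈ Finset.Icc (Kp + 1 + T) (K - Kp + T), d i) / ((K : ℝ) - 2 * Kp)) := by
  have hK1 : 1 ≤ K := by omega
  have hreindex : ∑ i ∈ Finset.Icc (Kp + 1) (K - Kp), d (i + T) =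
      ∑ i ∈ Finset.Icc (Kp + 1 + T) (K - Kp + T), d i := by
    rw [← Finset.map_add_right_Icc, Finset.sum_map]
    rfl
  constructor
  · -- membership: take d' i = d (min (i+T) K)
    set d' : ℕ → ℝ := fun i => d (min (i + T) K) with hd'
    have hmono' : ∀ i j, 1 ≤ i → i ≤ j → j ≤ K → d' i ≤ d' j := by
      intro i j hi hij hj
      exact hmono _ _ (by omega) (by omega) (by omega)
    refine ⟨msOf K d', ?_, ?_, ?_⟩
    · rw [msOf, Multiset.card_map, Finset.card_val, Nat.card_Icc]; omega
    · -- at most T changes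
      have hsplit : msOf K d =
          (Finset.Icc 1 T).val.map d + (Finset.Icc (T+1) K).val.map d := by
        rw [msOf, ← Multiset.map_add]
        congr 1
        rw [Nat.Icc_eq_range', Nat.Icc_eq_range', Nat.Icc_eq_range']
        have hap : List.range' 1 T ++ List.range' (T+1) (K - T) = List.range' 1 K := by
          have h := List.range'_append (s := 1) (m := T) (n := K - T) (step := 1)
          simp only [one_mul] at h
          rw [show (1:ℕ) + T = T + 1 by omega] at h
          rw [h]
          congr 1
          omega
        rw [show K+1-1 = K by omega, show T+1-1 = T by omega,
          show K+1-(T+1) = K - T by omega, Multiset.coe_add, hap]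
      have hsubE : (Finset.Icc (T+1) K).val.map d ≤ msOf K d' := by
        have hmap : (Finset.Icc (T+1) K) = Finset.map (addRightEmbedding T) (Finset.Icc 1 (K - T)) := by
          rw [Finset.map_add_right_Icc]
          congr 1 <;> omega
        rw [hmap]
        have : (Finset.map (addRightEmbedding T) (Finset.Icc 1 (K - T))).val =
            (Finset.Icc 1 (K - T)).val.map (fun i => i + T) := rfl
        rw [this, Multiset.map_map]
        have hcong : (Finset.Icc 1 (K - T)).val.map (d ∘ (fun i => i + T)) =
            (Finset.Icc 1 (K - T)).val.map d' := by
          apply Multiset.map_congr rfl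
          intro j hj
          rw [Finset.mem_val, Finset.mem_Icc] at hj
          simp only [Function.comp, hd']
          congr 1
          omega
        rw [hcong, msOf]
        apply Multiset.map_le_map
        rw [Finset.val_le_iff]
        intro j hj
        rw [Finset.mem_Icc] at hj ⊢
        omega
      calc Multiset.card (msOf K d - msOf K d')
          ≤ Multiset.card (msOf K d - (Finset.Icc (T+1) K).val.map d) :=
            Multiset.card_le_card (tsub_le_tsub_left hsubE _)
        _ ≤ T := by
            rw [hsplit, add_tsub_cancel_right, Multiset.card_map, Finset.card_val,
              Nat.card_Icc]
            omega
    · rw [tm, ← hreindex]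
      congr 1
      apply Finset.sum_congr rfl
      intro i hi
      rw [Finset.mem_Icc] at hi
      rw [sortedOf_msOf K d' hmono' (by omega) (by omega)]
      show d (i + T) = d (min (i + T) K)
      congr 1
      omega
  · -- upper bound
    rintro r ⟨E, hcard, hdiff, rfl⟩
    have hpos : (0:ℝ) < (K:ℝ) - 2 * Kp := by
      have : ((2 * Kp : ℕ) : ℝ) < (K : ℕ) := by exact_mod_cast hK
      push_cast at this
      linarith
    rw [tm, ← hreindex]
    apply div_le_div_of_nonneg_right ?_ hpos.le
    apply Finset.sum_le_sum
    intro i hi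
    rw [Finset.mem_Icc] at hi
    exact key K T d hmono E hcard hdiff (by omega) (by omega)
end

section
/- Let d_1 ≤ d_2 ≤ ... ≤ d_K be real numbers and let K' be a natural number with 2K' < K. For any T ≤ K', among all sequences e_1 ≤ e_2 ≤ ... ≤ e_K obtained by changing at most T of the values d_i (and re-sorting), the minimum possible value of the trimmed mean (∑_{i=K'+1}^{K-K'} e_i)/(K-2K') equals (∑_{i=K'+1-T}^{K-K'-T} d_i)/(K-2K'). -/
open Finset

lemma reindex_sum (K Kp T : ℕ) (hK : 2 * Kp < K) (hT : T ≤ Kp) (d : ℕ → ℝ) :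
    ∑ i ∈ Finset.Icc (Kp + 1) (K - Kp), d (i - T)
      = ∑ i ∈ Finset.Icc (Kp + 1 - T) (K - Kp - T), d i := by
  have h : Finset.Icc (Kp + 1) (K - Kp)
      = Finset.map (addRightEmbedding T) (Finset.Icc (Kp + 1 - T) (K - Kp - T)) := by
    rw [Finset.map_add_right_Icc]
    congr 1 <;> omega
  rw [h, Finset.sum_map]
  refine Finset.sum_congr rfl fun i hi => ?_
  simp only [addRightEmbedding_apply]
  congr 1
  omega

lemma msOf_eq (K : ℕ) (d : ℕ → ℝ) :
    msOf K d = ((List.range' 1 K).map d : List ℝ) := by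
  rw [msOf, Nat.Icc_eq_range']
  simp

lemma card_msOf (K : ℕ) (d : ℕ → ℝ) : Multiset.card (msOf K d) = K := by
  rw [msOf_eq]
  simp

lemma key_lb (K T : ℕ) (d : ℕ → ℝ)
    (hmono : ∀ i j, 1 ≤ i → i ≤ j → j ≤ K → d i ≤ d j)
    (E : Multiset ℝ) (hcard : Multiset.card E = K)
    (hdiff : Multiset.card (msOf K d - E) ≤ T)
    (i : ℕ) (hi1 : T + 1 ≤ i) (hiK : i ≤ K) :
    d (i - T) ≤ (E.sort (· ≤ ·)).getD (i - 1) 0 := by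
  by_contra hcon
  push_neg at hcon
  set c := d (i - T) with hc
  set l := E.sort (· ≤ ·) with hl
  have hlen : l.length = K := by rw [hl, Multiset.length_sort, hcard]
  have hEl : (↑l : Multiset ℝ) = E := Multiset.sort_eq _ _
  have hsorted : l.Pairwise (· ≤ ·) := Multiset.pairwise_sort _ _
  -- all of the first i entries of l are < c
  have hmain : ∀ a ∈ l.take i, a < c := by
    intro a ha
    rw [List.mem_take_iff_getElem] at ha
    obtain ⟨j, hj, rfl⟩ := ha
    have hj2 : j < l.length := lt_of_lt_of_le hj (min_le_right _ _)
    have hi2 : i - 1 < l.length := by omega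
    have hle : l.get ⟨j, hj2⟩ ≤ l.get ⟨i - 1, hi2⟩ := by
      apply hsorted.rel_get_of_le
      simp only [Fin.mk_le_mk]
      omega
    have : l.getD (i - 1) 0 = l.get ⟨i - 1, hi2⟩ := by
      rw [List.getD_eq_getElem _ _ hi2]
      simp
    simp only [List.get_eq_getElem] at hle
    calc l[j] ≤ l[i-1] := hle
      _ = l.getD (i-1) 0 := by rw [List.getD_eq_getElem _ _ hi2]
      _ < c := hcon
  -- hence E has at least i elements < c
  have hcount1 : i ≤ Multiset.countP (fun y => y < c) E := by
    rw [← hEl, Multiset.coe_countP]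
    have hsplit : l.countP (fun y => decide (y < c))
        = (l.take i).countP (fun y => decide (y < c))
          + (l.drop i).countP (fun y => decide (y < c)) := by
      rw [← List.countP_append, List.take_append_drop]
    have htake : (l.take i).countP (fun y => decide (y < c)) = i := by
      rw [List.countP_eq_length.mpr (by intro a ha; simpa using hmain a ha)]
      rw [List.length_take]
      omega
    omega
  -- but msOf has at most i - T - 1 elements < c
  have hD : Multiset.countP (fun y => y < c) (msOf K d) ≤ i - T - 1 := by
    rw [msOf, Multiset.countP_map]
    have hsub : (Finset.Icc 1 K).filter (fun a => d a < c) ⊆ Finset.Icc 1 (i - T - 1) := by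
      intro a ha
      simp only [Finset.mem_filter, Finset.mem_Icc] at ha ⊢
      refine ⟨ha.1.1, ?_⟩
      by_contra hcon2
      push_neg at hcon2
      have : c ≤ d a := hmono (i - T) a (by omega) (by omega) ha.1.2
      linarith [ha.2]
    calc Multiset.card (Multiset.filter (fun a => d a < c) (Finset.Icc 1 K).val)
        = ((Finset.Icc 1 K).filter (fun a => d a < c)).card := by
          rw [← Finset.filter_val]; rfl
      _ ≤ (Finset.Icc 1 (i - T - 1)).card := Finset.card_le_card hsub
      _ = i - T - 1 := by rw [Nat.card_Icc]; omega
  -- card (E - msOf) ≤ T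
  have hsym : Multiset.card (E - msOf K d) ≤ T := by
    have h1 := congrArg Multiset.card (Multiset.sub_add_inter E (msOf K d))
    have h2 := congrArg Multiset.card (Multiset.sub_add_inter (msOf K d) E)
    rw [Multiset.card_add] at h1 h2
    have hic : Multiset.card (E ∩ msOf K d) = Multiset.card (msOf K d ∩ E) := by
      rw [Multiset.inter_comm]
    have hDcard : Multiset.card (msOf K d) = K := card_msOf K d
    omega
  -- combine
  have hfinal : Multiset.countP (fun y => y < c) E ≤ T + (i - T - 1) := by
    have hle : E ≤ E - msOf K d + msOf K d := le_tsub_add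
    calc Multiset.countP (fun y => y < c) E
        ≤ Multiset.countP (fun y => y < c) (E - msOf K d + msOf K d) :=
          Multiset.countP_le_of_le _ hle
      _ = Multiset.countP (fun y => y < c) (E - msOf K d)
          + Multiset.countP (fun y => y < c) (msOf K d) := Multiset.countP_add _ _ _
      _ ≤ T + (i - T - 1) :=
          add_le_add (le_trans (Multiset.countP_le_card _ _) hsym) hD
  omega

lemma msOf_split (K T : ℕ) (hTK : T ≤ K) (d : ℕ → ℝ) :
    msOf K d
      = (↑(((List.range' 1 (K - T)).map d) ++ ((List.range' (K - T + 1) T).map d)) : Multiset ℝ) := by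
  rw [msOf_eq, ← List.map_append]
  have key := List.range'_append (s := 1) (m := K - T) (n := T) (step := 1)
  simp only [one_mul] at key
  rw [show 1 + (K - T) = K - T + 1 from by omega] at key
  rw [key, show K - T + T = K from by omega]

lemma mem_part (K Kp T : ℕ) (hK : 2 * Kp < K) (hT : T ≤ Kp) (d : ℕ → ℝ)
    (hmono : ∀ i j, 1 ≤ i → i ≤ j → j ≤ K → d i ≤ d j)
    (hnonneg : ∀ i, 1 ≤ i → i ≤ K → 0 ≤ d i) :
    ∃ E : Multiset ℝ, Multiset.card E = K ∧
      Multiset.card (msOf K d - E) ≤ T ∧ (∀ x ∈ E, (0 : ℝ) ≤ x) ∧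
      tm K Kp (sortedOf E)
        = (∑ i ∈ Finset.Icc (Kp + 1 - T) (K - Kp - T), d i) / ((K : ℝ) - 2 * Kp) := by
  refine ⟨(↑(List.replicate T (0:ℝ) ++ (List.range' 1 (K - T)).map d) : Multiset ℝ), ?_, ?_, ?_, ?_⟩
  · rw [Multiset.coe_card, List.length_append, List.length_replicate, List.length_map,
      List.length_range']
    omega
  · have hle : msOf K d - (↑(List.replicate T (0:ℝ) ++ (List.range' 1 (K - T)).map d) : Multiset ℝ)
        ≤ (↑((List.range' (K - T + 1) T).map d) : Multiset ℝ) := by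
      rw [tsub_le_iff_right, msOf_split K T (by omega) d, ← Multiset.coe_add]
      apply Multiset.le_iff_count.mpr
      intro a
      simp only [Multiset.count_add, Multiset.coe_count, List.count_append]
      omega
    calc Multiset.card (msOf K d - ↑(List.replicate T (0:ℝ) ++ (List.range' 1 (K - T)).map d))
        ≤ Multiset.card (↑((List.range' (K - T + 1) T).map d) : Multiset ℝ) :=
          Multiset.card_le_card hle
      _ = T := by rw [Multiset.coe_card, List.length_map, List.length_range']
  · intro x hx
    rw [Multiset.mem_coe, List.mem_append] at hx
    rcases hx with hx | hx
    · rw [List.mem_replicate] at hx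
      rw [hx.2]
    · rw [List.mem_map] at hx
      obtain ⟨j, hj, rfl⟩ := hx
      rw [List.mem_range'_1] at hj
      exact hnonneg j hj.1 (by omega)
  · have hsorted : (List.replicate T (0:ℝ) ++ (List.range' 1 (K - T)).map d).Pairwise (· ≤ ·) := by
      rw [List.pairwise_append]
      refine ⟨?_, ?_, ?_⟩
      · exact List.pairwise_replicate.mpr (by simp)
      · rw [List.pairwise_map]
        have h2 : List.Pairwise (· < ·) (List.range' 1 (K - T)) := List.pairwise_lt_range' 1 (by norm_num)
        refine h2.imp_of_mem ?_
        intro a b ha hb hab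
        rw [List.mem_range'_1] at ha hb
        exact hmono a b ha.1 (le_of_lt hab) (by omega)
      · intro x hx y hy
        rw [List.mem_replicate] at hx
        rw [List.mem_map] at hy
        obtain ⟨j, hj, rfl⟩ := hy
        rw [List.mem_range'_1] at hj
        rw [hx.2]
        exact hnonneg j hj.1 (by omega)
    have hsort_eq :
        (↑(List.replicate T (0:ℝ) ++ (List.range' 1 (K - T)).map d) : Multiset ℝ).sort (· ≤ ·)
          = List.replicate T (0:ℝ) ++ (List.range' 1 (K - T)).map d := by
      apply List.Perm.eq_of_pairwise' (Multiset.pairwise_sort _ _) hsorted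
      apply Multiset.coe_eq_coe.mp
      rw [Multiset.sort_eq]
    rw [tm]
    congr 1
    rw [← reindex_sum K Kp T hK hT d]
    refine Finset.sum_congr rfl fun i hi => ?_
    rw [Finset.mem_Icc] at hi
    rw [sortedOf, hsort_eq]
    have h1 : (List.replicate T (0:ℝ)).length ≤ i - 1 := by
      rw [List.length_replicate]; omega
    rw [List.getD_append_right _ _ _ _ h1, List.length_replicate]
    have h2 : i - 1 - T < ((List.range' 1 (K - T)).map d).length := by
      rw [List.length_map, List.length_range']; omega
    rw [List.getD_eq_getElem _ _ h2, List.getElem_map, List.getElem_range']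
    rw [one_mul]
    congr 1
    omega

theorem stmt1 (K Kp T : ℕ) (hK : 2 * Kp < K) (hT : T ≤ Kp) (d : ℕ → ℝ)
    (hmono : ∀ i j, 1 ≤ i → i ≤ j → j ≤ K → d i ≤ d j)
    (hnonneg : ∀ i, 1 ≤ i → i ≤ K → 0 ≤ d i) :
    IsLeast
      {r : ℝ | ∃ E : Multiset ℝ, Multiset.card E = K ∧
        Multiset.card (msOf K d - E) ≤ T ∧ (∀ x ∈ E, (0 : ℝ) ≤ x) ∧
        r = tm K Kp (sortedOf E)}
      ((∑ i ∈ Finset.Icc (Kp + 1 - T) (K - Kp - T), d i) / ((K : ℝ) - 2 * Kp)) := by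
  have hdenom : (0 : ℝ) < (K : ℝ) - 2 * Kp := by
    have h2 : ((2 * Kp : ℕ) : ℝ) < (K : ℝ) := Nat.cast_lt.mpr hK
    push_cast at h2
    linarith
  constructor
  · obtain ⟨E, h1, h2, h3, h4⟩ := mem_part K Kp T hK hT d hmono hnonneg
    exact ⟨E, h1, h2, h3, h4.symm⟩
  · rintro r ⟨E, hcard, hdiff, hnn, rfl⟩
    rw [tm, ← reindex_sum K Kp T hK hT d]
    refine div_le_div_of_nonneg_right ?_ hdenom.le
    refine Finset.sum_le_sum fun i hi => ?_
    rw [Finset.mem_Icc] at hi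
    exact key_lb K T d hmono E hcard hdiff i (by omega) (by omega)
end

section
/- (Tightness of upper bound) Let d_1 ≤ ... ≤ d_K be reals, K' with 2K' < K, and T ≤ K'. Consider the multiset E obtained from {d_1,...,d_K} by replacing d_1,...,d_T each with d_K. Then E differs from the original multiset in at most T elements, and the K'-trimmed mean of the sorted sequence of E equals (∑_{i=K'+1+T}^{K-K'+T} d_i)/(K-2K'). -/
open Finset

theorem stmt5 (K Kp T : ℕ) (hK : 2 * Kp < K) (hT : T ≤ Kp) (d : ℕ → ℝ)
    (hmono : ∀ i j, 1 ≤ i → i ≤ j → j ≤ K → d i ≤ d j) :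
    Multiset.card
      (msOf K d - (Multiset.replicate T (d K) + (Finset.Icc (T + 1) K).val.map d)) ≤ T ∧
    tm K Kp (sortedOf (Multiset.replicate T (d K) + (Finset.Icc (T + 1) K).val.map d)) =
      (∑ i ∈ Finset.Icc (Kp + 1 + T) (K - Kp + T), d i) / ((K : ℝ) - 2 * Kp) := by
  have hTK : T ≤ K := by omega
  -- value multisets as lists
  have hval1 : (Finset.Icc 1 K).val = (↑(List.range' 1 K) : Multiset ℕ) := by
    rw [Nat.Icc_eq_range']; norm_num
  have e2 : K + 1 - (T + 1) = K - T := by omega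
  have hval2 : (Finset.Icc (T + 1) K).val = (↑(List.range' (T + 1) (K - T)) : Multiset ℕ) := by
    rw [Nat.Icc_eq_range', e2]
  have hsplit : List.range' 1 T ++ List.range' (T + 1) (K - T) = List.range' 1 K := by
    have h := List.range'_append (s := 1) (m := T) (n := K - T) (step := 1)
    simp only [one_mul, Nat.add_comm 1 T] at h
    rw [h]
    congr 1
    omega
  -- the list representing E
  set l₁ : List ℝ := (List.range' (T + 1) (K - T)).map d with hl₁
  set l : List ℝ := l₁ ++ List.replicate T (d K) with hl
  have hlen₁ : l₁.length = K - T := by simp [hl₁]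
  have hEl : (Multiset.replicate T (d K) + (Finset.Icc (T + 1) K).val.map d) = (↑l : Multiset ℝ) := by
    rw [hval2, hl, ← Multiset.coe_add, Multiset.map_coe, ← Multiset.coe_replicate, add_comm]
  constructor
  · -- cardinality bound
    have hmsOf : msOf K d = (↑((List.range' 1 T).map d) : Multiset ℝ) + ↑l₁ := by
      rw [msOf, hval1, Multiset.map_coe, ← hsplit, List.map_append, ← Multiset.coe_add, hl₁]
    have hle : (↑l₁ : Multiset ℝ) ≤ (Multiset.replicate T (d K) + (Finset.Icc (T + 1) K).val.map d) := by
      rw [hEl, hl, ← Multiset.coe_add]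
      exact Multiset.le_add_right _ _
    calc Multiset.card (msOf K d - (Multiset.replicate T (d K) + (Finset.Icc (T + 1) K).val.map d))
        ≤ Multiset.card (msOf K d - ↑l₁) :=
          Multiset.card_le_card (tsub_le_tsub_left hle _)
      _ = Multiset.card (↑((List.range' 1 T).map d) : Multiset ℝ) := by
          rw [hmsOf, add_tsub_cancel_right]
      _ = T := by simp
  · -- trimmed mean
    have hmem₁ : ∀ x ∈ List.range' (T + 1) (K - T), T + 1 ≤ x ∧ x ≤ K := by
      intro x hx
      rw [List.mem_range'_1] at hx
      omega
    have hsorted : l.Pairwise (· ≤ ·) := by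
      rw [hl, List.pairwise_append]
      refine ⟨?_, ?_, ?_⟩
      · rw [hl₁, List.pairwise_map, List.pairwise_iff_getElem]
        intro i j hi hj hij
        simp only [List.length_range'] at hi hj
        rw [List.getElem_range'_1, List.getElem_range'_1]
        exact hmono _ _ (by omega) (by omega) (by omega)
      · exact List.pairwise_replicate.mpr (Or.inr le_rfl)
      · intro x hx y hy
        rw [hl₁, List.mem_map] at hx
        obtain ⟨m, hm, rfl⟩ := hx
        obtain ⟨hm1, hm2⟩ := hmem₁ m hm
        rw [List.eq_of_mem_replicate hy]
        exact hmono _ _ (by omega) hm2 le_rfl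
    have hsort : (Multiset.replicate T (d K) + (Finset.Icc (T + 1) K).val.map d).sort (· ≤ ·) = l := by
      apply List.Perm.eq_of_pairwise' (Multiset.pairwise_sort _ _) hsorted
      rw [← Multiset.coe_eq_coe, Multiset.sort_eq, hEl]
    rw [tm]
    congr 1
    rw [← Finset.map_add_right_Icc (Kp + 1) (K - Kp) T, Finset.sum_map]
    apply Finset.sum_congr rfl
    intro i hi
    rw [Finset.mem_Icc] at hi
    rw [sortedOf, hsort, hl]
    have hlt : i - 1 < l₁.length := by rw [hlen₁]; omega
    rw [addRightEmbedding_apply, List.getD_append _ _ _ _ hlt, List.getD_eq_getElem _ _ hlt]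
    simp only [hl₁, List.getElem_map, List.getElem_range'_1]
    congr 1
    omega
end

section
/- (Tightness of lower bound) Let d_1 ≤ ... ≤ d_K be reals, K' with 2K' < K, and T ≤ K'. Consider the multiset E obtained from {d_1,...,d_K} by replacing d_{K-T+1},...,d_K each with d_1. Then E differs from the original multiset in at most T elements, and the K'-trimmed mean of the sorted sequence of E equals (∑_{i=K'+1-T}^{K-K'-T} d_i)/(K-2K'). -/
open Finset

lemma icc_val_map (d : ℕ → ℝ) (n : ℕ) :
    (Finset.Icc 1 n).val.map d = ((List.range' 1 n).map d : Multiset ℝ) := by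
  have : (Finset.Icc 1 n).val = (List.range' 1 n : Multiset ℕ) := by
    rw [Nat.Icc_eq_range']
    simp
  rw [this, Multiset.map_coe]

theorem stmt6 (K Kp T : ℕ) (hK : 2 * Kp < K) (hT : T ≤ Kp) (d : ℕ → ℝ)
    (hmono : ∀ i j, 1 ≤ i → i ≤ j → j ≤ K → d i ≤ d j) :
    Multiset.card
      (msOf K d - (Multiset.replicate T (d 1) + (Finset.Icc 1 (K - T)).val.map d)) ≤ T ∧
    tm K Kp (sortedOf (Multiset.replicate T (d 1) + (Finset.Icc 1 (K - T)).val.map d)) =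
      (∑ i ∈ Finset.Icc (Kp + 1 - T) (K - Kp - T), d i) / ((K : ℝ) - 2 * Kp) := by
  have hTK : T ≤ K := by omega
  set A : Multiset ℝ := (Finset.Icc 1 (K - T)).val.map d with hA
  set E : Multiset ℝ := Multiset.replicate T (d 1) + A with hE
  constructor
  · -- cardinality bound
    have hAle : A ≤ msOf K d := by
      apply Multiset.map_le_map
      rw [Finset.val_le_iff]
      exact Finset.Icc_subset_Icc_right (by omega)
    have hAE : A ≤ E := Multiset.le_add_left _ _
    have h1 : msOf K d - E ≤ msOf K d - A := tsub_le_tsub_left hAE _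
    have h2 : Multiset.card (msOf K d - A) = T := by
      rw [Multiset.card_sub hAle]
      simp [msOf, hA, Nat.card_Icc]
      omega
    calc Multiset.card (msOf K d - E) ≤ Multiset.card (msOf K d - A) :=
          Multiset.card_le_card h1
      _ = T := h2
  · -- trimmed mean computation
    set L : List ℝ := List.replicate T (d 1) ++ (List.range' 1 (K - T)).map d with hL
    have hEL : E = (L : Multiset ℝ) := by
      rw [hL, hE, hA, icc_val_map]
      rfl
    have hLsorted : L.Pairwise (· ≤ ·) := by
      rw [hL, List.pairwise_append]
      refine ⟨?_, ?_, ?_⟩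
      · exact List.pairwise_replicate.mpr (Or.inr le_rfl)
      · refine List.pairwise_map.mpr ?_
        refine (List.pairwise_lt_range' (s := 1) (n := K - T)).imp_of_mem ?_
        intro a b ha hb hab
        rw [List.mem_range'_1] at ha hb
        exact hmono a b ha.1 hab.le (by omega)
      · intro a ha b hb
        rw [List.eq_of_mem_replicate ha]
        rw [List.mem_map] at hb
        obtain ⟨j, hj, rfl⟩ := hb
        rw [List.mem_range'_1] at hj
        exact hmono 1 j le_rfl hj.1 (by omega)
    have hsort : E.sort (· ≤ ·) = L := by
      apply List.Perm.eq_of_pairwise' (E.pairwise_sort _) hLsorted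
      rw [← Multiset.coe_eq_coe, Multiset.sort_eq, hEL]
    have hlen : ((List.range' 1 (K - T)).map d).length = K - T := by simp
    have hval : ∀ i ∈ Finset.Icc (Kp + 1) (K - Kp), sortedOf E i = d (i - T) := by
      intro i hi
      rw [Finset.mem_Icc] at hi
      rw [sortedOf, hsort, hL, List.getD_append_right _ _ _ _ (by simp; omega)]
      have hidx : i - 1 - (List.replicate T (d 1)).length = i - 1 - T := by simp
      rw [hidx]
      have hlt : i - 1 - T < ((List.range' 1 (K - T)).map d).length := by rw [hlen]; omega
      rw [List.getD_eq_getElem _ _ hlt, List.getElem_map, List.getElem_range']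
      congr 1
      omega
    rw [tm, Finset.sum_congr rfl hval]
    congr 1
    apply Finset.sum_nbij' (fun i => i - T) (fun j => j + T)
    · intro i hi; rw [Finset.mem_Icc] at *; omega
    · intro j hj; rw [Finset.mem_Icc] at *; omega
    · intro i hi; rw [Finset.mem_Icc] at hi; omega
    · intro j hj; rw [Finset.mem_Icc] at hj; omega
    · intro i hi; rfl
end

section
/- Let d_1 ≤ ... ≤ d_K be reals, K' with 2K' < K, and suppose a multiset E of size K differs from {d_1,...,d_K} in at most T ≤ K' elements, with sorted values e_1 ≤ ... ≤ e_K. Then e_i ≤ d_{i+T} for all i with 1 ≤ i ≤ K-T, and e_i ≥ d_{i-T} for all i with T+1 ≤ i ≤ K. -/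
open Finset

lemma sorted_nth_le (E : Multiset ℝ) (x : ℝ) (i : ℕ) (h1 : 1 ≤ i) (h2 : i ≤ Multiset.card E)
    (h : i ≤ Multiset.countP (fun a => a ≤ x) E) : sortedOf E i ≤ x := by
  set l := E.sort (· ≤ ·) with hl
  have hsort : l.Pairwise (· ≤ ·) := E.pairwise_sort _
  have hlen : l.length = Multiset.card E := E.length_sort _
  have hcount : Multiset.countP (fun a => a ≤ x) E = l.countP (fun a => decide (a ≤ x)) := by
    conv_lhs => rw [← E.sort_eq (· ≤ ·)]
    rw [Multiset.coe_countP]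
  by_contra hx
  push_neg at hx
  have hi : i - 1 < l.length := by omega
  have hget : sortedOf E i = l[i-1] := by
    rw [sortedOf, ← hl, List.getD_eq_getElem _ _ hi]
  rw [hget] at hx
  have key : l.countP (fun a => decide (a ≤ x)) ≤ i - 1 := by
    have hsplit : l.countP (fun a => decide (a ≤ x)) =
        (l.take (i-1)).countP (fun a => decide (a ≤ x)) +
        (l.drop (i-1)).countP (fun a => decide (a ≤ x)) := by
      rw [← List.countP_append, List.take_append_drop]
    have hdrop : (l.drop (i-1)).countP (fun a => decide (a ≤ x)) = 0 := by
      rw [List.countP_eq_zero]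
      intro a ha
      obtain ⟨j, hj, rfl⟩ := List.mem_iff_getElem.mp ha
      rw [List.getElem_drop]
      have hlt : i - 1 + j < l.length := by
        rw [List.length_drop] at hj; omega
      have hle : l[i-1] ≤ l[i-1+j] := by
        have := hsort.rel_get_of_le (a := ⟨i-1, hi⟩) (b := ⟨i-1+j, hlt⟩) (by simp)
        simpa using this
      simp only [decide_eq_true_eq]
      intro hax
      exact absurd (lt_of_lt_of_le hx hle) (not_lt.mpr hax)
    have htake : (l.take (i-1)).countP (fun a => decide (a ≤ x)) ≤ i - 1 := by
      calc (l.take (i-1)).countP (fun a => decide (a ≤ x)) ≤ (l.take (i-1)).length :=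
            List.countP_le_length
        _ ≤ i - 1 := by rw [List.length_take]; omega
    omega
  omega

lemma le_sorted_nth (E : Multiset ℝ) (x : ℝ) (i : ℕ) (h1 : 1 ≤ i) (h2 : i ≤ Multiset.card E)
    (h : Multiset.countP (fun a => a < x) E ≤ i - 1) : x ≤ sortedOf E i := by
  set l := E.sort (· ≤ ·) with hl
  have hsort : l.Pairwise (· ≤ ·) := E.pairwise_sort _
  have hlen : l.length = Multiset.card E := E.length_sort _
  have hcount : Multiset.countP (fun a => a < x) E = l.countP (fun a => decide (a < x)) := by
    conv_lhs => rw [← E.sort_eq (· ≤ ·)]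
    rw [Multiset.coe_countP]
  by_contra hx
  push_neg at hx
  have hi : i - 1 < l.length := by omega
  have hget : sortedOf E i = l[i-1] := by
    rw [sortedOf, ← hl, List.getD_eq_getElem _ _ hi]
  rw [hget] at hx
  have key : i ≤ l.countP (fun a => decide (a < x)) := by
    have htake : (l.take i).countP (fun a => decide (a < x)) = (l.take i).length := by
      rw [List.countP_eq_length]
      intro a ha
      obtain ⟨j, hj, rfl⟩ := List.mem_iff_getElem.mp ha
      rw [List.length_take] at hj
      have hjl : j < l.length := by omega
      rw [List.getElem_take]
      have hle : l[j] ≤ l[i-1] := by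
        have := hsort.rel_get_of_le (a := ⟨j, hjl⟩) (b := ⟨i-1, hi⟩) (by simp; omega)
        simpa using this
      simp only [decide_eq_true_eq]
      exact lt_of_le_of_lt hle hx
    have hsplit : l.countP (fun a => decide (a < x)) =
        (l.take i).countP (fun a => decide (a < x)) +
        (l.drop i).countP (fun a => decide (a < x)) := by
      rw [← List.countP_append, List.take_append_drop]
    have : (l.take i).length = i := by rw [List.length_take]; omega
    omega
  omega

theorem stmt7 (K Kp T : ℕ) (hK : 2 * Kp < K) (hT : T ≤ Kp) (d : ℕ → ℝ)
    (hmono : ∀ i j, 1 ≤ i → i ≤ j → j ≤ K → d i ≤ d j)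
    (E : Multiset ℝ) (hcard : Multiset.card E = K)
    (hdiff : Multiset.card (msOf K d - E) ≤ T) :
    (∀ i, 1 ≤ i → i ≤ K - T → sortedOf E i ≤ d (i + T)) ∧
    (∀ i, T + 1 ≤ i → i ≤ K → d (i - T) ≤ sortedOf E i) := by
  classical
  have hTK : T < K := by omega
  set D := msOf K d with hD
  have hcardD : Multiset.card D = K := by simp [hD, msOf, Nat.card_Icc]
  set I := D ∩ E with hI
  have hIleD : I ≤ D := Multiset.inter_le_left
  have hIleE : I ≤ E := Multiset.inter_le_right
  have hDE : D - E = D - I := by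
    ext a
    simp only [Multiset.count_sub, hI, Multiset.count_inter]
    omega
  have hcardI : K - T ≤ Multiset.card I := by
    have h2 : Multiset.card (D - I) = K - Multiset.card I := by
      rw [Multiset.card_sub hIleD, hcardD]
    rw [hDE, h2] at hdiff
    have : Multiset.card I ≤ K := by
      have := Multiset.card_le_card hIleD; omega
    omega
  have hcardIK : Multiset.card I ≤ K := by
    have := Multiset.card_le_card hIleD; omega
  -- count of D elements above d m
  have hDabove : ∀ m, m ≤ K →
      Multiset.countP (fun a => ¬ a ≤ d m) D ≤ K - m := by
    intro m hm
    rw [hD, msOf, Multiset.countP_map]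
    have : (Finset.Icc 1 K).val.filter (fun j => ¬ d j ≤ d m) =
        ((Finset.Icc 1 K).filter (fun j => ¬ d j ≤ d m)).val := rfl
    rw [this]
    have hsub : (Finset.Icc 1 K).filter (fun j => ¬ d j ≤ d m) ⊆ Finset.Icc (m+1) K := by
      intro j hj
      simp only [Finset.mem_filter, Finset.mem_Icc] at hj ⊢
      obtain ⟨⟨hj1, hj2⟩, hj3⟩ := hj
      refine ⟨?_, hj2⟩
      by_contra hc
      exact hj3 (hmono j m hj1 (by omega) hm)
    calc Multiset.card ((Finset.Icc 1 K).filter (fun j => ¬ d j ≤ d m)).val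
        = ((Finset.Icc 1 K).filter (fun j => ¬ d j ≤ d m)).card := rfl
      _ ≤ (Finset.Icc (m+1) K).card := Finset.card_le_card hsub
      _ = K - m := by rw [Nat.card_Icc]; omega
  have hDbelow : ∀ m, 1 ≤ m → m ≤ K →
      Multiset.countP (fun a => a < d m) D ≤ m - 1 := by
    intro m hm1 hm
    rw [hD, msOf, Multiset.countP_map]
    have : (Finset.Icc 1 K).val.filter (fun j => d j < d m) =
        ((Finset.Icc 1 K).filter (fun j => d j < d m)).val := rfl
    rw [this]
    have hsub : (Finset.Icc 1 K).filter (fun j => d j < d m) ⊆ Finset.Icc 1 (m-1) := by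
      intro j hj
      simp only [Finset.mem_filter, Finset.mem_Icc] at hj ⊢
      obtain ⟨⟨hj1, hj2⟩, hj3⟩ := hj
      refine ⟨hj1, ?_⟩
      by_contra hc
      exact absurd (hmono m j hm1 (by omega) hj2) (not_le.mpr hj3)
    calc Multiset.card ((Finset.Icc 1 K).filter (fun j => d j < d m)).val
        = ((Finset.Icc 1 K).filter (fun j => d j < d m)).card := rfl
      _ ≤ (Finset.Icc 1 (m-1)).card := Finset.card_le_card hsub
      _ = m - 1 := by rw [Nat.card_Icc]; omega
  constructor
  · intro i hi1 hi2
    have himT : i + T ≤ K := by omega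
    apply sorted_nth_le E (d (i+T)) i hi1 (by omega)
    -- countP (≤ d(i+T)) E ≥ countP over I ≥ card I - (K - (i+T)) ≥ i
    have hmonoI : Multiset.countP (fun a => a ≤ d (i+T)) I ≤
        Multiset.countP (fun a => a ≤ d (i+T)) E :=
      Multiset.countP_le_of_le _ hIleE
    have hsplitI : Multiset.countP (fun a => a ≤ d (i+T)) I +
        Multiset.countP (fun a => ¬ a ≤ d (i+T)) I = Multiset.card I := by
      rw [Multiset.countP_eq_card_filter, Multiset.countP_eq_card_filter,
        ← Multiset.card_add, Multiset.filter_add_not]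
    have hnotI : Multiset.countP (fun a => ¬ a ≤ d (i+T)) I ≤ K - (i+T) := by
      calc Multiset.countP (fun a => ¬ a ≤ d (i+T)) I
          ≤ Multiset.countP (fun a => ¬ a ≤ d (i+T)) D := Multiset.countP_le_of_le _ hIleD
        _ ≤ K - (i+T) := hDabove (i+T) himT
    omega
  · intro i hi1 hi2
    have hiT1 : 1 ≤ i - T := by omega
    have hiTK : i - T ≤ K := by omega
    apply le_sorted_nth E (d (i-T)) i (by omega) (by omega)
    have hEsplit : E = (E - I) + I := (tsub_add_cancel_of_le hIleE).symm
    have hcount : Multiset.countP (fun a => a < d (i-T)) E =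
        Multiset.countP (fun a => a < d (i-T)) (E - I) +
        Multiset.countP (fun a => a < d (i-T)) I := by
      conv_lhs => rw [hEsplit]
      rw [Multiset.countP_add]
    have h1 : Multiset.countP (fun a => a < d (i-T)) (E - I) ≤ T := by
      calc Multiset.countP (fun a => a < d (i-T)) (E - I)
          ≤ Multiset.card (E - I) := Multiset.countP_le_card _ _
        _ = K - Multiset.card I := by rw [Multiset.card_sub hIleE, hcard]
        _ ≤ T := by omega
    have h2 : Multiset.countP (fun a => a < d (i-T)) I ≤ (i - T) - 1 := by
      calc Multiset.countP (fun a => a < d (i-T)) I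
          ≤ Multiset.countP (fun a => a < d (i-T)) D := Multiset.countP_le_of_le _ hIleD
        _ ≤ (i-T) - 1 := hDbelow (i-T) hiT1 hiTK
    omega
end

section
/- Under a Group Attack poisoning at most T ≤ K' samples in total across all classes, if for every class c ≠ ŷ and every split T^{ŷ} with 0 ≤ T^{ŷ} ≤ T it holds that U^{ŷ}(T^{ŷ}) < L^c(T - T^{ŷ}), then for every allocation (T^1,...,T^C) of nonnegative integers with ∑_c T^c ≤ T and for every corresponding poisoned support set, the robust-distance classifier still predicts ŷ. -/
open Finset

lemma Lb_anti (K Kp : ℕ) (hK : 2 * Kp < K) (d : ℕ → ℝ)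
    (hmono : ∀ i j, 1 ≤ i → i ≤ j → j ≤ K → d i ≤ d j)
    (t t' : ℕ) (h : t ≤ t') (h' : t' ≤ Kp) :
    Lb K Kp d t' ≤ Lb K Kp d t := by
  unfold Lb
  apply div_le_div_of_nonneg_right ?_ ?_ |>.trans_eq rfl
  · have e1 : ∑ i ∈ Finset.Icc (Kp + 1 - t') (K - Kp - t'), d i
        = ∑ j ∈ Finset.range (K - 2 * Kp), d (Kp + 1 - t' + j) := by
      rw [← Finset.Ico_add_one_right_eq_Icc, Finset.sum_Ico_eq_sum_range]
      apply Finset.sum_congr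
      · congr 1; omega
      · intros; rfl
    have e2 : ∑ i ∈ Finset.Icc (Kp + 1 - t) (K - Kp - t), d i
        = ∑ j ∈ Finset.range (K - 2 * Kp), d (Kp + 1 - t + j) := by
      rw [← Finset.Ico_add_one_right_eq_Icc, Finset.sum_Ico_eq_sum_range]
      apply Finset.sum_congr
      · congr 1; omega
      · intros; rfl
    rw [e1, e2]
    apply Finset.sum_le_sum
    intro j hj
    simp only [Finset.mem_range] at hj
    exact hmono _ _ (by omega) (by omega) (by omega)
  · have : (2 * Kp : ℝ) < K := by exact_mod_cast hK
    linarith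

theorem stmt9 (C K Kp T : ℕ) (hK : 2 * Kp < K) (hT : T ≤ Kp)
    (d : Fin C → ℕ → ℝ)
    (hmono : ∀ c, ∀ i j, 1 ≤ i → i ≤ j → j ≤ K → d c i ≤ d c j)
    (yhat : Fin C) (t : Fin C → ℕ) (hsum : ∑ c, t c ≤ T)
    (R : Fin C → ℝ)
    (hlo : ∀ c, Lb K Kp (d c) (t c) ≤ R c)
    (hhi : ∀ c, R c ≤ Ub K Kp (d c) (t c))
    (hcert : ∀ c, c ≠ yhat → ∀ s, s ≤ T → Ub K Kp (d yhat) s < Lb K Kp (d c) (T - s)) :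
    ∀ c, c ≠ yhat → R yhat < R c := by
  intro c hc
  have htc : t c + t yhat ≤ T := by
    have hsub : ({c, yhat} : Finset (Fin C)) ⊆ Finset.univ := Finset.subset_univ _
    have := Finset.sum_le_sum_of_subset_of_nonneg hsub
      (fun i _ _ => Nat.zero_le (t i))
    rw [Finset.sum_pair hc] at this
    exact this.trans hsum
  have h1 : R yhat ≤ Ub K Kp (d yhat) (t yhat) := hhi yhat
  have h2 : Ub K Kp (d yhat) (t yhat) < Lb K Kp (d c) (T - t yhat) :=
    hcert c hc (t yhat) (by omega)
  have h3 : Lb K Kp (d c) (T - t yhat) ≤ Lb K Kp (d c) (t c) :=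
    Lb_anti K Kp hK (d c) (hmono c) (t c) (T - t yhat) (by omega) (by omega)
  linarith [hlo c]
end

section
/- If T > K', the supremum of the K'-trimmed mean over all multisets differing from {d_1,...,d_K} in at most T elements is +∞ (i.e., it is unbounded above): for every M ∈ ℝ there exists such a multiset whose K'-trimmed mean exceeds M. -/
open Finset

theorem stmt12 (K Kp T : ℕ) (hK : 2 * Kp < K) (hT : Kp < T) (d : ℕ → ℝ)
    (hmono : ∀ i j, 1 ≤ i → i ≤ j → j ≤ K → d i ≤ d j) :
    ∀ M : ℝ, ∃ E : Multiset ℝ, Multiset.card E = K ∧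
      Multiset.card (msOf K d - E) ≤ T ∧ M < tm K Kp (sortedOf E) := by
  intro M
  set n := K - Kp - 1 with hn
  have hKn : n + (Kp + 1) = K := by omega
  have hKKp : K - Kp = n + 1 := by omega
  have hKpn : Kp ≤ n := by omega
  set D : ℝ := (K : ℝ) - 2 * Kp with hD
  have hD0 : (0:ℝ) < D := by
    have : ((2 * Kp : ℕ) : ℝ) < (K : ℝ) := by exact_mod_cast hK
    push_cast at this; rw [hD]; linarith
  set S : ℝ := ∑ i ∈ Finset.Icc (Kp+1) n, d i with hS
  set C : ℝ := max (d K) (M * D - S + 1) with hC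
  have hdC : ∀ i, 1 ≤ i → i ≤ K → d i ≤ C := fun i h1 h2 =>
    le_trans (hmono i K h1 h2 le_rfl) (le_max_left _ _)
  set L : List ℝ := (List.range' 1 n).map d ++ List.replicate (Kp+1) C with hL
  have hlen1 : ((List.range' 1 n).map d).length = n := by simp
  have hLsorted : L.Pairwise (· ≤ ·) := by
    rw [hL, List.pairwise_append]
    refine ⟨?_, ?_, ?_⟩
    · rw [List.pairwise_iff_getElem]
      intro i j hi hj hij
      simp only [List.getElem_map, List.getElem_range'_1]
      simp only [List.length_map, List.length_range'] at hi hj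
      exact hmono _ _ (by omega) (by omega) (by omega)
    · exact List.pairwise_replicate.mpr (Or.inr le_rfl)
    · intro x hx y hy
      rw [List.eq_of_mem_replicate hy]
      obtain ⟨a, ha, rfl⟩ := List.mem_map.mp hx
      rw [List.mem_range'_1] at ha
      exact hdC a ha.1 (by omega)
  refine ⟨(↑L : Multiset ℝ), ?_, ?_, ?_⟩
  · simp [hL, hKn]
  · have hms : msOf K d = (↑((List.range' 1 n).map d) : Multiset ℝ) +
        (↑((List.range' (1+n) (Kp+1)).map d) : Multiset ℝ) := by
      have hsplit : (Finset.Icc 1 K).val =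
          (↑(List.range' 1 n ++ List.range' (1+n) (Kp+1)) : Multiset ℕ) := by
        rw [Nat.Icc_eq_range']
        show ((List.range' 1 (K+1-1) : List ℕ) : Multiset ℕ) = _
        rw [List.range'_append_1]
        congr 2
        omega
      rw [msOf, hsplit, Multiset.map_coe, List.map_append, ← Multiset.coe_add]
    have hE : (↑L : Multiset ℝ) = (↑((List.range' 1 n).map d) : Multiset ℝ) +
        (↑(List.replicate (Kp+1) C) : Multiset ℝ) := by
      rw [hL]; simp
    rw [hms, hE, add_tsub_add_eq_tsub_left]
    calc Multiset.card _ ≤ Multiset.card (↑((List.range' (1+n) (Kp+1)).map d) : Multiset ℝ) :=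
          Multiset.card_le_card (tsub_le_self)
      _ = Kp + 1 := by simp
      _ ≤ T := by omega
  · have hsort : ((↑L : Multiset ℝ).sort (· ≤ ·)) = L :=
      List.Perm.eq_of_pairwise'
        (Multiset.pairwise_sort _ _) hLsorted (Multiset.coe_eq_coe.mp (Multiset.sort_eq _ _))
    have hLlen : L.length = K := by simp [hL, hKn]
    have hterm : ∀ i ∈ Finset.Icc (Kp+1) n, sortedOf (↑L) i = d i := by
      intro i hi
      rw [Finset.mem_Icc] at hi
      rw [sortedOf, hsort, hL, List.getD_append _ _ _ _ (by rw [hlen1]; omega),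
        List.getD_eq_getElem _ _ (by rw [hlen1]; omega)]
      simp only [List.getElem_map, List.getElem_range'_1]
      congr 1; omega
    have htop : sortedOf (↑L) (n + 1) = C := by
      rw [sortedOf, hsort, hL]
      rw [List.getD_append_right _ _ _ _ (by rw [hlen1]; omega)]
      rw [List.getD_eq_getElem _ _ (by simp)]
      simp
    have hsum : ∑ i ∈ Finset.Icc (Kp + 1) (K - Kp), sortedOf (↑L) i = S + C := by
      rw [hKKp, Finset.sum_Icc_succ_top (by omega), htop]
      congr 1
      exact Finset.sum_congr rfl hterm
    rw [tm, hsum, ← hD, lt_div_iff₀ hD0]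
    have : M * D - S + 1 ≤ C := le_max_right _ _
    linarith
end

section
/- (Single-change exchange step) Let d_1 ≤ ... ≤ d_K be reals and K' with 2K' < K. Suppose indices i < j and a value v are given, and let E_1 be the sorted multiset obtained from {d_1,...,d_K} by replacing d_j with v, and E_2 the sorted multiset obtained by replacing d_i with v instead. Then the K'-trimmed mean of E_2 is greater than or equal to the K'-trimmed mean of E_1. -/
open Finset

lemma helper (b c : ℝ) (t : List ℝ) (hcb : c ≤ b) (hl : (c :: t).Pairwise (· ≤ ·)) (k : ℕ) :
    (c :: t).getD k 0 ≤ (t.orderedInsert (· ≤ ·) b).getD k 0 := by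
  induction t generalizing c k with
  | nil =>
    simp only [List.orderedInsert]
    match k with
    | 0 => simpa using hcb
    | k + 1 => simp
  | cons h t ih =>
    simp only [List.orderedInsert]
    by_cases hbh : b ≤ h
    · simp only [if_pos hbh]
      match k with
      | 0 => simpa using hcb
      | k + 1 => simp
    · simp only [if_neg hbh]
      match k with
      | 0 =>
        have : c ≤ h := (List.pairwise_cons.mp hl).1 h (by simp)
        simpa using this
      | k + 1 =>
        simpa using ih h (le_of_not_ge hbh) (List.pairwise_cons.mp hl).2 k

lemma key_s14 (a b : ℝ) (hab : a ≤ b) (l : List ℝ) (hl : l.Pairwise (· ≤ ·)) (k : ℕ) :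
    (l.orderedInsert (· ≤ ·) a).getD k 0 ≤ (l.orderedInsert (· ≤ ·) b).getD k 0 := by
  induction l generalizing k with
  | nil =>
    match k with
    | 0 => simpa using hab
    | k + 1 => simp
  | cons c t ih =>
    simp only [List.orderedInsert]
    by_cases hac : a ≤ c
    · by_cases hbc : b ≤ c
      · simp only [if_pos hac, if_pos hbc]
        match k with
        | 0 => simpa using hab
        | k + 1 => simp
      · simp only [if_pos hac, if_neg hbc]
        match k with
        | 0 => simpa using hac
        | k + 1 => simpa using helper b c t (le_of_not_ge hbc) hl k
    · have hbc : ¬ b ≤ c := fun h => hac (hab.trans h)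
      simp only [if_neg hac, if_neg hbc]
      match k with
      | 0 => simp
      | k + 1 => simpa using ih (List.pairwise_cons.mp hl).2 k

lemma sortcons (a : ℝ) (s : Multiset ℝ) :
    (a ::ₘ s).sort (· ≤ ·) = (s.sort (· ≤ ·)).orderedInsert (· ≤ ·) a := by
  refine (fun hp h1 h2 => List.Perm.eq_of_pairwise' (r := (· ≤ ·)) h1 h2 hp) ?_ ?_ ?_
  · refine Multiset.coe_eq_coe.mp ?_ |>.trans (List.perm_orderedInsert _ a _).symm
    rw [← Multiset.cons_coe]
    exact (Multiset.sort_eq (a ::ₘ s) (· ≤ ·)).trans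
      (congrArg (a ::ₘ ·) (Multiset.sort_eq s (· ≤ ·)).symm)
  · exact Multiset.pairwise_sort _ _
  · exact (Multiset.pairwise_sort s (· ≤ ·)).orderedInsert a _

lemma sortedOf_cons_le (a b : ℝ) (hab : a ≤ b) (s : Multiset ℝ) (k : ℕ) :
    sortedOf (a ::ₘ s) k ≤ sortedOf (b ::ₘ s) k := by
  unfold sortedOf
  rw [sortcons, sortcons]
  exact key_s14 a b hab _ (Multiset.pairwise_sort _ _) _

theorem stmt14 (K Kp : ℕ) (hK : 2 * Kp < K) (d : ℕ → ℝ)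
    (hmono : ∀ i j, 1 ≤ i → i ≤ j → j ≤ K → d i ≤ d j)
    (i j : ℕ) (h1 : 1 ≤ i) (hij : i < j) (hjK : j ≤ K) (v : ℝ) :
    tm K Kp (sortedOf (v ::ₘ (msOf K d).erase (d j))) ≤
      tm K Kp (sortedOf (v ::ₘ (msOf K d).erase (d i))) := by
  by_cases hne : d i = d j
  · rw [hne]
  · have hiK : i ≤ K := (lt_of_lt_of_le hij hjK).le
    have hdij : d i ≤ d j := hmono i j h1 hij.le hjK
    have hmemi : d i ∈ msOf K d :=
      Multiset.mem_map.mpr ⟨i, by simp [msOf, Finset.mem_Icc]; omega, rfl⟩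
    have hmemj : d j ∈ msOf K d :=
      Multiset.mem_map.mpr ⟨j, by simp [msOf, Finset.mem_Icc]; omega, rfl⟩
    have hmemi' : d i ∈ (msOf K d).erase (d j) :=
      (Multiset.mem_erase_of_ne hne).mpr hmemi
    have hmemj' : d j ∈ (msOf K d).erase (d i) :=
      (Multiset.mem_erase_of_ne (Ne.symm hne)).mpr hmemj
    set s := ((msOf K d).erase (d j)).erase (d i) with hs
    have e1 : (msOf K d).erase (d j) = d i ::ₘ s := (Multiset.cons_erase hmemi').symm
    have e2 : (msOf K d).erase (d i) = d j ::ₘ s := by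
      rw [hs, Multiset.erase_comm]
      exact (Multiset.cons_erase hmemj').symm
    rw [e1, e2]
    have hpos : (0:ℝ) < (K : ℝ) - 2 * Kp := by
      have : (2 * Kp : ℝ) < K := by exact_mod_cast hK
      linarith
    unfold tm
    gcongr with k hk
    rw [Multiset.cons_swap v (d i) s, Multiset.cons_swap v (d j) s]
    exact sortedOf_cons_le _ _ hdij _ _
end

section
/- (Replacing values below the maximum by the maximum dominates any single-replacement attack) Let d_1 ≤ ... ≤ d_K be reals, K' with 2K' < K, and T ≤ K'. For any choice of T indices s_1 < ... < s_T and any replacement values ṽ_1,...,ṽ_T, the K'-trimmed mean of the resulting sorted multiset is at most the K'-trimmed mean obtained by replacing d_1,...,d_T with d_K. -/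
open Finset

-- Lemma A: in a sorted list, if at least i+1 elements are ≤ x, then the element at index i is ≤ x.
lemma getD_le_of_le_countP {l : List ℝ} (hl : l.Pairwise (· ≤ ·)) {i : ℕ} {x : ℝ}
    (hi : i < l.length) (hc : i + 1 ≤ l.countP (fun a => decide (a ≤ x))) :
    l.getD i 0 ≤ x := by
  by_contra hx
  push_neg at hx
  rw [List.getD_eq_getElem l 0 hi] at hx
  have hdrop : ∀ a ∈ l.drop i, ¬ (a ≤ x) := by
    intro a ha hax
    obtain ⟨j, hj, rfl⟩ := List.mem_iff_getElem.1 ha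
    rw [List.getElem_drop] at hax
    have hij : i + j < l.length := by
      have := hj; rw [List.length_drop] at this; omega
    have hle : l[i] ≤ l[i + j] := by
      rcases Nat.eq_or_lt_of_le (Nat.le_add_right i j) with h | h
      · exact le_of_eq (by congr 1)
      · exact List.pairwise_iff_get.1 hl ⟨i, hi⟩ ⟨i + j, hij⟩ h
    exact absurd (le_trans hle hax) (not_le.2 hx)
  have hsplit := List.countP_append (p := fun a => decide (a ≤ x)) (l₁ := l.take i) (l₂ := l.drop i)
  rw [List.take_append_drop] at hsplit
  have h1 : (l.take i).countP (fun a => decide (a ≤ x)) ≤ i :=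
    le_trans List.countP_le_length (by simp)
  have h2 : (l.drop i).countP (fun a => decide (a ≤ x)) = 0 :=
    List.countP_eq_zero.2 (by simpa using hdrop)
  omega

-- Lemma B: multiset version
lemma sortedOf_le_of_countP {E : Multiset ℝ} {i : ℕ} {x : ℝ}
    (h1 : 1 ≤ i) (hiK : i ≤ Multiset.card E)
    (hc : i ≤ Multiset.countP (fun a => a ≤ x) E) :
    sortedOf E i ≤ x := by
  have hsorted : (E.sort (· ≤ ·)).Pairwise (· ≤ ·) := Multiset.pairwise_sort _ _
  have hlen : (E.sort (· ≤ ·)).length = Multiset.card E := Multiset.length_sort _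
  have hcount : (E.sort (· ≤ ·)).countP (fun a => decide (a ≤ x))
      = Multiset.countP (fun a => a ≤ x) E := by
    conv_rhs => rw [← Multiset.sort_eq E (· ≤ ·)]
    rw [Multiset.coe_countP]
  exact getD_le_of_le_countP hsorted (by omega) (by omega)


theorem stmt16 (K Kp T : ℕ) (hK : 2 * Kp < K) (hT : T ≤ Kp) (d : ℕ → ℝ)
    (hmono : ∀ i j, 1 ≤ i → i ≤ j → j ≤ K → d i ≤ d j)
    (s : Fin T → ℕ) (hs : StrictMono s)
    (hs1 : ∀ k, 1 ≤ s k) (hsK : ∀ k, s k ≤ K)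
    (v : Fin T → ℝ) :
    tm K Kp (sortedOf
      ((msOf K d - Multiset.map (fun k : Fin T => d (s k)) (Finset.univ : Finset (Fin T)).val)
        + Multiset.map v (Finset.univ : Finset (Fin T)).val)) ≤
    tm K Kp (sortedOf (Multiset.replicate T (d K) + (Finset.Icc (T + 1) K).val.map d)) := by
  set R := Multiset.map (fun k : Fin T => d (s k)) (Finset.univ : Finset (Fin T)).val with hRdef
  set V := Multiset.map v (Finset.univ : Finset (Fin T)).val with hVdef
  set E := (msOf K d - R) + V with hEdef
  set F := Multiset.replicate T (d K) + (Finset.Icc (T + 1) K).val.map d with hFdef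
  -- the explicit sorted list of F
  set L : List ℝ := ((List.range' (T + 1) (K - T)).map d) ++ List.replicate T (d K) with hLdef
  have hLcoe : (↑L : Multiset ℝ) = F := by
    have hF2 : F = ↑(List.replicate T (d K) ++ (List.range' (T + 1) (K - T)).map d) := by
      rw [hFdef, Nat.Icc_eq_range', show K + 1 - (T + 1) = K - T by omega]
      simp [Multiset.map_coe, ← Multiset.coe_add, Multiset.coe_replicate]
    rw [hF2, hLdef, Multiset.coe_eq_coe]
    exact List.perm_append_comm
  have hLsorted : L.Pairwise (· ≤ ·) := by
    have hmem : ∀ a ∈ (List.range' (T + 1) (K - T)).map d, a ≤ d K := by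
      intro a ha
      obtain ⟨m, hm, rfl⟩ := List.mem_map.1 ha
      rw [List.mem_range'_1] at hm
      exact hmono m K (by omega) (by omega) le_rfl
    rw [hLdef, List.pairwise_append]
    refine ⟨?_, ?_, ?_⟩
    · rw [List.pairwise_iff_get]
      intro i j hij
      simp only [List.get_eq_getElem, List.getElem_map, List.getElem_range']
      have hi' : (i : ℕ) < K - T := by simpa using i.isLt
      have hj' : (j : ℕ) < K - T := by simpa using j.isLt
      exact hmono _ _ (by omega) (by simpa using Nat.le_of_lt hij) (by omega)
    · rw [List.pairwise_iff_get]
      intro i j hij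
      simp only [List.get_eq_getElem, List.getElem_replicate]
      exact le_rfl
    · intro a ha b hb
      rw [List.eq_of_mem_replicate hb]
      exact hmem a ha
  have hsortF : F.sort (· ≤ ·) = L := by
    apply List.Perm.eq_of_pairwise' (Multiset.pairwise_sort _ _) hLsorted
    rw [← Multiset.coe_eq_coe, Multiset.sort_eq, hLcoe]
  -- basic cardinalities
  have hcardmsOf : Multiset.card (msOf K d) = K := by
    rw [msOf, Multiset.card_map]
    simpa using Nat.card_Icc 1 K
  have hRle : R ≤ msOf K d := by
    have hmapmap : R = Multiset.map d (Multiset.map s (Finset.univ : Finset (Fin T)).val) := by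
      rw [hRdef, Multiset.map_map]; rfl
    rw [hmapmap, msOf]
    apply Multiset.map_le_map
    have hnd : (Multiset.map s (Finset.univ : Finset (Fin T)).val).Nodup :=
      Multiset.Nodup.map hs.injective (Finset.univ : Finset (Fin T)).nodup
    rw [Multiset.le_iff_subset hnd]
    intro a ha
    obtain ⟨k, _, rfl⟩ := Multiset.mem_map.1 ha
    rw [← Finset.mem_def, Finset.mem_Icc]
    exact ⟨hs1 k, hsK k⟩
  have hcardR : Multiset.card R = T := by simp [hRdef]
  have hcardV : Multiset.card V = T := by simp [hVdef]
  have hcardE : Multiset.card E = K := by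
    rw [hEdef, Multiset.card_add, Multiset.card_sub hRle, hcardmsOf, hcardR, hcardV]
    omega
  -- pointwise comparison on the trimmed window
  have hpoint : ∀ i ∈ Finset.Icc (Kp + 1) (K - Kp), sortedOf E i ≤ sortedOf F i := by
    intro i hi
    rw [Finset.mem_Icc] at hi
    have hi1 : 1 ≤ i := by omega
    have hiTK : i + T ≤ K := by omega
    -- RHS value
    have hFval : sortedOf F i = d (i + T) := by
      rw [sortedOf, hsortF, hLdef]
      have hlt : i - 1 < ((List.range' (T + 1) (K - T)).map d).length := by
        simp; omega
      rw [List.getD_append _ _ _ _ hlt, List.getD_eq_getElem _ 0 hlt,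
        List.getElem_map, List.getElem_range']
      congr 1
      omega
    rw [hFval]
    -- LHS count bound
    apply sortedOf_le_of_countP hi1 (by omega)
    set p : ℝ → Prop := fun a => a ≤ d (i + T) with hp
    have hcR : Multiset.countP p R ≤ T := by
      exact le_trans (Multiset.countP_le_card _ _) (le_of_eq hcardR)
    have hsub : Multiset.map d (Finset.Icc 1 (i + T)).val ≤ msOf K d := by
      rw [msOf]
      apply Multiset.map_le_map
      exact Finset.val_le_iff.2 (Finset.Icc_subset_Icc le_rfl hiTK)
    have hcsub : Multiset.countP p (Multiset.map d (Finset.Icc 1 (i + T)).val) = i + T := by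
      have hall : ∀ a ∈ Multiset.map d (Finset.Icc 1 (i + T)).val, p a := by
        intro a ha
        obtain ⟨m, hm, rfl⟩ := Multiset.mem_map.1 ha
        rw [← Finset.mem_def, Finset.mem_Icc] at hm
        exact hmono m (i + T) hm.1 hm.2 hiTK
      rw [Multiset.countP_eq_card_filter, Multiset.filter_eq_self.2 hall, Multiset.card_map]
      simpa using Nat.card_Icc 1 (i + T)
    have hcmsOf : i + T ≤ Multiset.countP p (msOf K d) := by
      calc i + T = Multiset.countP p (Multiset.map d (Finset.Icc 1 (i + T)).val) := hcsub.symm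
        _ ≤ _ := Multiset.countP_le_of_le _ hsub
    have hcsplit : Multiset.countP p (msOf K d)
        = Multiset.countP p (msOf K d - R) + Multiset.countP p R := by
      conv_lhs => rw [← tsub_add_cancel_of_le hRle]
      rw [Multiset.countP_add]
    have hcE : Multiset.countP p (msOf K d - R) ≤ Multiset.countP p E :=
      Multiset.countP_le_of_le _ (Multiset.le_add_right _ _)
    have hpE : Multiset.countP p E = Multiset.countP (fun a => a ≤ d (i + T)) E := rfl
    omega
  -- conclude
  have hden : (0 : ℝ) < (K : ℝ) - 2 * Kp := by
    have h2 : ((2 * Kp : ℕ) : ℝ) < (K : ℕ) := by exact_mod_cast hK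
    push_cast at h2
    linarith
  rw [tm, tm]
  gcongr with j hj
  exact hpoint j hj
end
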